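/- arXiv:1811.11116 — 2 statements merged into one kernel-verified Lean document; each statement's English description precedes it below -/
import Mathlib

section
/- Let H be a graph on vertex set {1,...,ℓ} and G_1,...,G_ℓ be graphs. Then χ_f(H{G_1,...,G_ℓ}) ≥ χ_f(H) · min_i χ_f(G_i). -/
open Finset

/-- A fractional coloring of `G`. -/
def IsFracColoring {V : Type*} [Fintype V] [DecidableEq V] (G : SimpleGraph V)
    (x : Finset V → ℝ) : Prop :=
  (∀ I, 0 ≤ x I) ∧
  (∀ I : Finset V, x I ≠ 0 → ∀ u ∈ I, ∀ v ∈ I, ¬ G.Adj u v) ∧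
  (∀ v : V, 1 ≤ ∑ I ∈ Finset.univ.filter (fun I : Finset V => v ∈ I), x I)

/-- The fractional chromatic number. -/
noncomputable def fracChromaticNumber {V : Type*} [Fintype V] [DecidableEq V]
    (G : SimpleGraph V) : ℝ :=
  sInf { t : ℝ | ∃ x : Finset V → ℝ, IsFracColoring G x ∧ t = ∑ I : Finset V, x I }


/-- The generalized lexicographic product `H{G_1,…,G_ℓ}`: disjoint copies of the `G i`,
with all edges added between the copies of `G i` and `G j` whenever `ij ∈ E(H)`. -/
def SimpleGraph.comp {ℓ : ℕ} {V : Fin ℓ → Type*} (H : SimpleGraph (Fin ℓ))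
    (G : ∀ i, SimpleGraph (V i)) : SimpleGraph (Σ i, V i) where
  Adj x y := H.Adj x.1 y.1 ∨ ∃ h : x.1 = y.1, (G y.1).Adj (h ▸ x.2) y.2
  symm := by
    refine ⟨?_⟩
    rintro ⟨i, u⟩ ⟨j, v⟩ (h | ⟨h, hadj⟩)
    · exact Or.inl h.symm
    · dsimp at h; subst h
      exact Or.inr ⟨rfl, hadj.symm⟩
  loopless := by
    refine ⟨?_⟩
    rintro ⟨i, u⟩ (h | ⟨h, hadj⟩)
    · exact H.irrefl h
    · have : h = rfl := Subsingleton.elim _ _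
      rw [this] at hadj
      exact (G i).irrefl hadj

section Aux

variable {V : Type*} [Fintype V] [DecidableEq V] (G : SimpleGraph V)

/-- The singleton coloring witnesses that colorings exist. -/
lemma exists_isFracColoring : ∃ x : Finset V → ℝ, IsFracColoring G x := by
  classical
  refine ⟨fun I => if ∃ v, I = {v} then 1 else 0, fun I => by dsimp only; split <;> norm_num,
    ?_, ?_⟩
  · intro I hI u hu v hv
    rw [ne_eq, ite_eq_right_iff] at hI
    push_neg at hI
    obtain ⟨⟨w, rfl⟩, -⟩ := hI
    simp only [mem_singleton] at hu hv
    subst hu; subst hv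
    exact G.irrefl
  · intro v
    have h1 : (fun I : Finset V => if ∃ w, I = {w} then (1:ℝ) else 0) {v} = 1 := by
      dsimp only; rw [if_pos ⟨v, rfl⟩]
    calc (1:ℝ) = _ := h1.symm
      _ ≤ _ := Finset.single_le_sum (f := fun I : Finset V => if ∃ w, I = {w} then (1:ℝ) else 0)
          (fun I _ => by split <;> norm_num)
          (by simp)

lemma fracSet_nonempty :
    { t : ℝ | ∃ x : Finset V → ℝ, IsFracColoring G x ∧ t = ∑ I : Finset V, x I }.Nonempty := by
  obtain ⟨x, hx⟩ := exists_isFracColoring G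
  exact ⟨_, x, hx, rfl⟩

lemma fracSet_bddBelow :
    BddBelow { t : ℝ | ∃ x : Finset V → ℝ, IsFracColoring G x ∧ t = ∑ I : Finset V, x I } := by
  refine ⟨0, ?_⟩
  rintro t ⟨x, hx, rfl⟩
  exact Finset.sum_nonneg fun I _ => hx.1 I

lemma fracChromaticNumber_nonneg : 0 ≤ fracChromaticNumber G := by
  apply Real.sInf_nonneg
  rintro t ⟨x, hx, rfl⟩
  exact Finset.sum_nonneg fun I _ => hx.1 I

lemma fracChromaticNumber_le_sum {x : Finset V → ℝ} (hx : IsFracColoring G x) :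
    fracChromaticNumber G ≤ ∑ I : Finset V, x I :=
  csInf_le (fracSet_bddBelow G) ⟨x, hx, rfl⟩

lemma one_le_fracChromaticNumber [Nonempty V] : 1 ≤ fracChromaticNumber G := by
  apply le_csInf (fracSet_nonempty G)
  rintro t ⟨x, hx, rfl⟩
  obtain ⟨v⟩ := ‹Nonempty V›
  calc (1:ℝ) ≤ ∑ I ∈ Finset.univ.filter (fun I : Finset V => v ∈ I), x I := hx.2.2 v
    _ ≤ ∑ I : Finset V, x I :=
      Finset.sum_le_sum_of_subset_of_nonneg (Finset.filter_subset _ _)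
        (fun I _ _ => hx.1 I)

end Aux

section Key

variable {ℓ : ℕ} {V : Fin ℓ → Type*} [∀ i, Fintype (V i)] [∀ i, DecidableEq (V i)]
  (H : SimpleGraph (Fin ℓ)) (G : ∀ i, SimpleGraph (V i))

/-- The slice of a set of product vertices at index `i`. -/
def restr (i : Fin ℓ) (J : Finset (Σ j, V j)) : Finset (V i) :=
  Finset.univ.filter (fun u => (⟨i, u⟩ : Σ j, V j) ∈ J)

lemma mem_restr {i : Fin ℓ} {J : Finset (Σ j, V j)} {u : V i} :
    u ∈ restr i J ↔ (⟨i, u⟩ : Σ j, V j) ∈ J := by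
  simp [restr]

lemma restr_ne_empty_iff {i : Fin ℓ} {J : Finset (Σ j, V j)} :
    restr i J ≠ ∅ ↔ i ∈ J.image Sigma.fst := by
  rw [← Finset.nonempty_iff_ne_empty]
  constructor
  · rintro ⟨u, hu⟩
    exact Finset.mem_image.2 ⟨⟨i, u⟩, mem_restr.1 hu, rfl⟩
  · intro h
    obtain ⟨⟨j, u⟩, hmem, rfl⟩ := Finset.mem_image.1 h
    exact ⟨u, mem_restr.2 hmem⟩

/-- The restriction to a slice gives a coloring of `G i`;
consequently `χ_f(G i)` bounds the weight of the sets meeting slice `i`. -/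
lemma slice_bound (i : Fin ℓ) {x : Finset (Σ j, V j) → ℝ}
    (hx : IsFracColoring (H.comp G) x) :
    fracChromaticNumber (G i) ≤
      ∑ J ∈ Finset.univ.filter (fun J : Finset (Σ j, V j) => i ∈ J.image Sigma.fst), x J := by
  classical
  set y : Finset (V i) → ℝ := fun I =>
    if I = ∅ then 0 else ∑ J ∈ Finset.univ.filter (fun J => restr i J = I), x J with hy
  have hynn : ∀ I, 0 ≤ y I := by
    intro I
    by_cases hI : I = ∅
    · simp [hy, hI]
    · simp only [hy, hI, if_false]
      exact Finset.sum_nonneg fun J _ => hx.1 J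
  have hcol : IsFracColoring (G i) y := by
    refine ⟨hynn, ?_, ?_⟩
    · intro I hI u hu v hv hadj
      have hIe : I ≠ ∅ := Finset.ne_empty_of_mem hu
      have hI' : ∑ J ∈ Finset.univ.filter (fun J => restr i J = I), x J ≠ 0 := by
        simpa [hy, hIe] using hI
      obtain ⟨J, hJmem, hJne⟩ := Finset.exists_ne_zero_of_sum_ne_zero hI'
      have hres : restr i J = I := (Finset.mem_filter.1 hJmem).2
      have hu' : (⟨i, u⟩ : Σ j, V j) ∈ J := mem_restr.1 (hres ▸ hu)
      have hv' : (⟨i, v⟩ : Σ j, V j) ∈ J := mem_restr.1 (hres ▸ hv)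
      exact hx.2.1 J hJne _ hu' _ hv' (Or.inr ⟨rfl, hadj⟩)
    · intro v
      have step : ∑ I ∈ Finset.univ.filter (fun I : Finset (V i) => v ∈ I), y I =
          ∑ J ∈ Finset.univ.filter (fun J : Finset (Σ j, V j) => v ∈ restr i J), x J := by
        have h2 : ∑ I ∈ Finset.univ.filter (fun I : Finset (V i) => v ∈ I), y I =
            ∑ I ∈ Finset.univ.filter (fun I : Finset (V i) => v ∈ I),
              ∑ J ∈ Finset.univ.filter (fun J => restr i J = I), x J := by
          apply Finset.sum_congr rfl
          intro I hI
          have hvI : v ∈ I := (Finset.mem_filter.1 hI).2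
          simp [hy, Finset.ne_empty_of_mem hvI]
        rw [h2, Finset.sum_fiberwise_eq_sum_filter]
        apply Finset.sum_congr _ (fun _ _ => rfl)
        apply Finset.filter_congr
        intro J _
        simp [mem_restr]
      rw [step]
      calc (1:ℝ) ≤ ∑ J ∈ Finset.univ.filter
            (fun J : Finset (Σ j, V j) => (⟨i, v⟩ : Σ j, V j) ∈ J), x J := hx.2.2 ⟨i, v⟩
        _ = _ := by
          apply Finset.sum_congr _ (fun _ _ => rfl)
          apply Finset.filter_congr
          intro J _
          simp [mem_restr]
  have htot : ∑ I : Finset (V i), y I =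
      ∑ J ∈ Finset.univ.filter (fun J : Finset (Σ j, V j) => i ∈ J.image Sigma.fst), x J := by
    have h1 : ∑ I : Finset (V i), y I = ∑ I ∈ Finset.univ.filter
        (fun I : Finset (V i) => I ≠ ∅), ∑ J ∈ Finset.univ.filter
        (fun J => restr i J = I), x J := by
      rw [Finset.sum_filter]
      apply Finset.sum_congr rfl
      intro I _
      by_cases hI : I = ∅ <;> simp [hy, hI]
    rw [h1, Finset.sum_fiberwise_eq_sum_filter]
    apply Finset.sum_congr _ (fun _ _ => rfl)
    apply Finset.filter_congr
    intro J _
    simp only [Finset.mem_filter, Finset.mem_univ, true_and]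
    exact restr_ne_empty_iff
  calc fracChromaticNumber (G i) ≤ ∑ I : Finset (V i), y I :=
      fracChromaticNumber_le_sum _ hcol
    _ = _ := htot

lemma key_bound {m : ℝ} (hm : 0 < m) (hmle : ∀ i, m ≤ fracChromaticNumber (G i))
    {x : Finset (Σ j, V j) → ℝ} (hx : IsFracColoring (H.comp G) x) :
    fracChromaticNumber H * m ≤ ∑ J : Finset (Σ j, V j), x J := by
  classical
  set z : Finset (Fin ℓ) → ℝ := fun S =>
    (∑ J ∈ Finset.univ.filter (fun J : Finset (Σ j, V j) => J.image Sigma.fst = S), x J) / m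
    with hz
  have hznn : ∀ S, 0 ≤ z S := fun S =>
    div_nonneg (Finset.sum_nonneg fun J _ => hx.1 J) hm.le
  have hcol : IsFracColoring H z := by
    refine ⟨hznn, ?_, ?_⟩
    · intro S hS i hi j hj hadj
      simp only [hz, ne_eq, div_eq_zero_iff, not_or] at hS
      obtain ⟨J, hJmem, hJne⟩ := Finset.exists_ne_zero_of_sum_ne_zero hS.1
      have himg : J.image Sigma.fst = S := (Finset.mem_filter.1 hJmem).2
      obtain ⟨⟨i', u⟩, hu, hieq⟩ := Finset.mem_image.1 (himg ▸ hi)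
      obtain ⟨⟨j', v⟩, hv, hjeq⟩ := Finset.mem_image.1 (himg ▸ hj)
      dsimp at hieq hjeq
      subst hieq; subst hjeq
      exact hx.2.1 J hJne _ hu _ hv (Or.inl hadj)
    · intro i
      have step : ∑ S ∈ Finset.univ.filter (fun S : Finset (Fin ℓ) => i ∈ S), z S =
          (∑ J ∈ Finset.univ.filter
            (fun J : Finset (Σ j, V j) => i ∈ J.image Sigma.fst), x J) / m := by
        simp only [hz]
        rw [← Finset.sum_div]
        congr 1
        have := Finset.sum_fiberwise_eq_sum_filter Finset.univ
          (Finset.univ.filter (fun S : Finset (Fin ℓ) => i ∈ S)) (fun J => J.image Sigma.fst) x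
        rw [this]
        apply Finset.sum_congr _ (fun _ _ => rfl)
        apply Finset.filter_congr
        intro J _
        simp
      rw [step, le_div_iff₀ hm, one_mul]
      exact le_trans (hmle i) (slice_bound H G i hx)
  have htot : ∑ S : Finset (Fin ℓ), z S = (∑ J : Finset (Σ j, V j), x J) / m := by
    simp only [hz]
    rw [← Finset.sum_div]
    congr 1
    have := Finset.sum_fiberwise_of_maps_to
      (s := (Finset.univ : Finset (Finset (Σ j, V j))))
      (t := (Finset.univ : Finset (Finset (Fin ℓ))))
      (g := fun J => J.image Sigma.fst) (fun J _ => Finset.mem_univ _) x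
    exact this
  have h1 : fracChromaticNumber H ≤ (∑ J : Finset (Σ j, V j), x J) / m := by
    rw [← htot]
    exact fracChromaticNumber_le_sum _ hcol
  calc fracChromaticNumber H * m ≤ ((∑ J : Finset (Σ j, V j), x J) / m) * m :=
      mul_le_mul_of_nonneg_right h1 hm.le
    _ = ∑ J : Finset (Σ j, V j), x J := div_mul_cancel₀ _ hm.ne'

end Key

/-- `χ_f(H{G_1,…,G_ℓ}) ≥ χ_f(H) · min_i χ_f(G_i)`. -/
theorem fracChromaticNumber_comp_ge {ℓ : ℕ} (hℓ : 0 < ℓ) {V : Fin ℓ → Type*}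
    [∀ i, Fintype (V i)] [∀ i, DecidableEq (V i)]
    (H : SimpleGraph (Fin ℓ)) (G : ∀ i, SimpleGraph (V i)) :
    fracChromaticNumber H * ⨅ i, fracChromaticNumber (G i) ≤
      fracChromaticNumber (H.comp G) := by
  classical
  haveI : Nonempty (Fin ℓ) := ⟨⟨0, hℓ⟩⟩
  set m : ℝ := ⨅ i, fracChromaticNumber (G i) with hm
  have hbdd : BddBelow (Set.range fun i => fracChromaticNumber (G i)) :=
    Set.Finite.bddBelow (Set.finite_range _)
  have hmle : ∀ i, m ≤ fracChromaticNumber (G i) := fun i => ciInf_le hbdd i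
  by_cases hE : ∀ i, Nonempty (V i)
  · -- all parts nonempty : m ≥ 1 > 0
    have hm1 : (1:ℝ) ≤ m := by
      apply le_ciInf
      intro i
      haveI := hE i
      exact one_le_fracChromaticNumber (G i)
    have hmpos : 0 < m := lt_of_lt_of_le one_pos hm1
    apply le_csInf (fracSet_nonempty _)
    rintro t ⟨x, hx, rfl⟩
    exact key_bound H G hmpos hmle hx
  · -- some part empty : m = 0
    push_neg at hE
    obtain ⟨i, hi⟩ := hE
    haveI : IsEmpty (V i) := hi
    have hzero : fracChromaticNumber (G i) ≤ 0 := by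
      apply csInf_le (fracSet_bddBelow _)
      refine ⟨fun _ => 0, ⟨fun _ => le_refl 0, fun I hI => absurd rfl hI,
        fun v => (IsEmpty.false v).elim⟩, by simp⟩
    have hm0 : m ≤ 0 := le_trans (hmle i) hzero
    have hm0' : 0 ≤ m := le_ciInf fun j => fracChromaticNumber_nonneg (G j)
    have : m = 0 := le_antisymm hm0 hm0'
    rw [this, mul_zero]
    exact fracChromaticNumber_nonneg _
end

section
/- For all k ≥ 1, n ≥ 7: F_{k+1}(n) ≥ 4 · F_k(F_k(n+1) + 1), where F_k(n) = 2 ↑^k n. -/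
/-- `towerF k n = 2 ↑^k n`, the Knuth up-arrow tower function with base 2
(for `k ≥ 1`; `towerF 0` is set to `2 ^ n` as well, but is never used). -/
def towerF : ℕ → ℕ → ℕ
  | 0, n => 2 ^ n
  | 1, n => 2 ^ n
  | (k+2), 0 => 1
  | (k+2), (n+1) => towerF (k+1) (towerF (k+2) n)
termination_by k n => (k, n)

/-- `towerFinv k m = 2 ↓^k m`, the largest `b` with `towerF k b ≤ m`. -/
noncomputable def towerFinv (k m : ℕ) : ℕ :=
  sSup { b : ℕ | towerF k b ≤ m }


lemma towerF_step (k n : ℕ) :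
    towerF (k+2) (n+1) = towerF (k+1) (towerF (k+2) n) := by
  simp [towerF]

lemma lt_towerF : ∀ (k n : ℕ), n < towerF k n
  | 0, n => by simpa [towerF] using Nat.lt_two_pow_self (n := n)
  | 1, n => by simpa [towerF] using Nat.lt_two_pow_self (n := n)
  | (k+2), 0 => by simp [towerF]
  | (k+2), (n+1) => by
      rw [towerF_step]
      have h1 := lt_towerF (k+2) n
      have h2 := lt_towerF (k+1) (towerF (k+2) n)
      omega
termination_by k n => (k, n)

lemma two_pow_le_towerF : ∀ (k n : ℕ), 2 ^ n ≤ towerF k n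
  | 0, n => by simp [towerF]
  | 1, n => by simp [towerF]
  | (k+2), 0 => by simp [towerF]
  | (k+2), (n+1) => by
      rw [towerF_step]
      have h1 := lt_towerF (k+2) n
      have h2 := two_pow_le_towerF (k+1) (towerF (k+2) n)
      calc 2 ^ (n+1) ≤ 2 ^ towerF (k+2) n := Nat.pow_le_pow_right (by norm_num) h1
        _ ≤ _ := h2
termination_by k n => (k, n)

lemma towerF_mono (k : ℕ) : Monotone (towerF k) := by
  have : StrictMono (towerF k) := by
    match k with
    | 0 => intro a b h; simpa [towerF] using Nat.pow_lt_pow_right (by norm_num) h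
    | 1 => intro a b h; simpa [towerF] using Nat.pow_lt_pow_right (by norm_num) h
    | (k+2) =>
      apply strictMono_nat_of_lt_succ
      intro n
      rw [towerF_step]
      exact lt_towerF (k+1) (towerF (k+2) n)
  exact this.monotone

lemma two_mul_le_two_pow (t : ℕ) : 2 * t ≤ 2 ^ t := by
  rcases Nat.eq_zero_or_pos t with h | h
  · subst h; norm_num
  · have h1 : t - 1 < 2 ^ (t - 1) := Nat.lt_two_pow_self
    have h2 : 2 * t ≤ 2 * 2 ^ (t - 1) := by omega
    calc 2 * t ≤ 2 * 2 ^ (t - 1) := h2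
      _ = 2 ^ (t - 1 + 1) := by rw [pow_succ]; ring
      _ = 2 ^ t := by congr 1; omega

lemma four_mul_towerF_le (k : ℕ) (hk : 1 ≤ k) (x : ℕ) :
    4 * towerF k x ≤ towerF k (x + 2) := by
  match k, hk with
  | 1, _ =>
    simp only [towerF]
    rw [show x + 2 = x + 1 + 1 from rfl, pow_succ, pow_succ]
    omega
  | (k+2), _ =>
    set t := towerF (k+2) x with ht
    have ht1 : x < t := lt_towerF (k+2) x
    -- 4 * t ≤ 2 ^ (2 ^ t)
    have key : 4 * t ≤ 2 ^ 2 ^ t := by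
      have h1 : 2 * t ≤ 2 ^ t := two_mul_le_two_pow t
      have h2 : t + 1 ≤ 2 ^ t := Nat.lt_two_pow_self (n := t)
      calc 4 * t = 2 * (2 * t) := by ring
        _ ≤ 2 * 2 ^ t := by omega
        _ = 2 ^ (t + 1) := by rw [pow_succ]; ring
        _ ≤ 2 ^ 2 ^ t := Nat.pow_le_pow_right (by norm_num) h2
    have e1 : towerF (k+2) (x+1) = towerF (k+1) t := towerF_step k x
    have e2 : towerF (k+2) (x+2) = towerF (k+1) (towerF (k+2) (x+1)) := towerF_step k (x+1)
    calc 4 * t ≤ 2 ^ 2 ^ t := key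
      _ ≤ 2 ^ towerF (k+1) t :=
          Nat.pow_le_pow_right (by norm_num) (two_pow_le_towerF (k+1) t)
      _ = 2 ^ towerF (k+2) (x+1) := by rw [e1]
      _ ≤ towerF (k+1) (towerF (k+2) (x+1)) := two_pow_le_towerF _ _
      _ = towerF (k+2) (x+2) := e2.symm

/-- For `k ≥ 1` and `n ≥ 7`, `F_{k+1}(n) ≥ 4 · F_k(F_k(n+1) + 1)`. -/
theorem towerF_succ_ge_four_mul (k : ℕ) (hk : 1 ≤ k) (n : ℕ) (hn : 7 ≤ n) :
    4 * towerF k (towerF k (n + 1) + 1) ≤ towerF (k + 1) n := by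
  obtain ⟨j, rfl⟩ : ∃ j, k = j + 1 := ⟨k - 1, by omega⟩
  obtain ⟨p, rfl⟩ : ∃ p, n = p + 2 := ⟨n - 2, by omega⟩
  have hp : 5 ≤ p := by omega
  -- F_{k+1}(n) = F_k(F_k(F_{k+1}(p)))
  have e1 : towerF (j+2) (p+2) = towerF (j+1) (towerF (j+2) (p+1)) := towerF_step j (p+1)
  have e2 : towerF (j+2) (p+1) = towerF (j+1) (towerF (j+2) p) := towerF_step j p
  -- F_{k+1}(p) ≥ 2^p ≥ p + 8 = n + 6
  have hFp : p + 8 ≤ towerF (j+2) p := by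
    have h1 : 2 ^ p ≤ towerF (j+2) p := two_pow_le_towerF _ _
    have h2 : 2 * p ≤ 2 ^ p := two_mul_le_two_pow p
    have h3 : (32:ℕ) ≤ 2 ^ p :=
      le_trans (by norm_num : (32:ℕ) ≤ 2 ^ 5) (Nat.pow_le_pow_right (by norm_num) hp)
    omega
  -- F_k(F_{k+1}(p)) ≥ F_k(n+3) ≥ 4 F_k(n+1) ≥ F_k(n+1) + 3
  have h3 : towerF (j+1) (p + 2 + 1 + 2) ≤ towerF (j+1) (towerF (j+2) p) :=
    towerF_mono (j+1) (by omega)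
  have h4 : 4 * towerF (j+1) (p + 2 + 1) ≤ towerF (j+1) (p + 2 + 1 + 2) :=
    four_mul_towerF_le (j+1) (by omega) _
  have h5 := lt_towerF (j+1) (p + 2 + 1)
  have hsub : towerF (j+1) (p + 2 + 1) + 3 ≤ towerF (j+2) (p+1) := by
    rw [e2]; omega
  have h6 : towerF (j+1) (towerF (j+1) (p + 2 + 1) + 1 + 2) ≤
      towerF (j+1) (towerF (j+2) (p+1)) := towerF_mono (j+1) (by omega)
  have h7 : 4 * towerF (j+1) (towerF (j+1) (p + 2 + 1) + 1) ≤
      towerF (j+1) (towerF (j+1) (p + 2 + 1) + 1 + 2) :=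
    four_mul_towerF_le (j+1) (by omega) _
  rw [e1]
  omega
end
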